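/- Assume ∫_{(0,1]} z^{α/d} λ(dz) < ∞ and ∫_{(1,∞)} z^{α/d} λ(dz) < ∞. Then τ̄(r) ∼ r^{-α/d} ∫_{(0,∞)} z^{α/d} λ(dz) as r → ∞, i.e. the ratio of the two sides tends to 1. -/

import Mathlib

open MeasureTheory Set Filter Topology
open scoped ENNReal NNReal

/-- `tauBar d α t lam r = τ̄(r)`, where
`τ(B) = (Leb ⊗ λ)({(s,z) ∈ (0,t] × (0,∞) : z·s^{-d/α} ∈ B})` and `τ̄(r) = τ((r,∞))`. -/
noncomputable def tauBar (d : ℕ) (α t : ℝ) (lam : MeasureTheory.Measure ℝ) (r : ℝ) : ℝ≥0∞ :=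
  ((MeasureTheory.volume.restrict (Set.Ioc (0:ℝ) t)).prod (lam.restrict (Set.Ioi (0:ℝ))))
    {p : ℝ × ℝ | r < p.2 * p.1 ^ (-((d : ℝ) / α))}

/-- Inner slice measure. -/
lemma aux_inner (γ : ℝ) (hγ : 0 < γ) {t r z : ℝ} (ht : 0 < t) (hr : 0 < r) (hz : 0 < z) :
    (volume.restrict (Ioc (0:ℝ) t)) {s : ℝ | r < z * s ^ (-γ)} =
      ENNReal.ofReal (min t ((z / r) ^ γ⁻¹)) := by
  have hmeas : MeasurableSet {s : ℝ | r < z * s ^ (-γ)} := by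
    apply measurableSet_lt measurable_const
    fun_prop
  rw [Measure.restrict_apply hmeas]
  set c := (z / r) ^ γ⁻¹ with hc
  have hzr : 0 < z / r := div_pos hz hr
  have hcpos : 0 < c := Real.rpow_pos_of_pos hzr _
  have hkey : ∀ s : ℝ, s ∈ Ioc (0:ℝ) t → (r < z * s ^ (-γ) ↔ s < c) := by
    intro s hs
    have hs0 : 0 < s := hs.1
    have hsγ : 0 < s ^ γ := Real.rpow_pos_of_pos hs0 _
    rw [Real.rpow_neg hs0.le, ← div_eq_mul_inv, lt_div_iff₀ hsγ, mul_comm,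
      ← lt_div_iff₀ hr, hc, ← Real.lt_rpow_inv_iff_of_pos hs0.le hzr.le hγ]
  have hset : {s : ℝ | r < z * s ^ (-γ)} ∩ Ioc 0 t = Iio c ∩ Ioc 0 t := by
    ext s
    simp only [mem_inter_iff, mem_setOf_eq, mem_Iio]
    exact ⟨fun ⟨h1, h2⟩ => ⟨(hkey s h2).1 h1, h2⟩, fun ⟨h1, h2⟩ => ⟨(hkey s h2).2 h1, h2⟩⟩
  rw [hset]
  apply le_antisymm
  · calc volume (Iio c ∩ Ioc 0 t) ≤ volume (Ioc 0 (min t c)) := by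
          apply measure_mono
          rintro s ⟨h1, h2, h3⟩
          exact ⟨h2, le_min h3 (le_of_lt h1)⟩
      _ = ENNReal.ofReal (min t c) := by rw [Real.volume_Ioc, sub_zero]
  · calc ENNReal.ofReal (min t c) = volume (Ioo 0 (min t c)) := by
          rw [Real.volume_Ioo, sub_zero]
      _ ≤ volume (Iio c ∩ Ioc 0 t) := by
          apply measure_mono
          rintro s ⟨h1, h2⟩
          exact ⟨lt_of_lt_of_le h2 (min_le_right _ _),
            h1, le_of_lt (lt_of_lt_of_le h2 (min_le_left _ _))⟩

/-- Pointwise real identity. -/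
lemma aux_min_eq (β : ℝ) (hβ : 0 < β) {t r z : ℝ} (hr : 0 < r) (hz : 0 < z) :
    min t ((z / r) ^ β) = r ^ (-β) * min (t * r ^ β) (z ^ β) := by
  have hrβ : (0:ℝ) < r ^ β := Real.rpow_pos_of_pos hr _
  have hrneg : (0:ℝ) ≤ r ^ (-β) := (Real.rpow_pos_of_pos hr _).le
  rw [mul_min_of_nonneg _ _ hrneg]
  have h1 : r ^ (-β) * (t * r ^ β) = t := by
    rw [mul_comm t, ← mul_assoc, ← Real.rpow_add hr, neg_add_cancel, Real.rpow_zero, one_mul]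
  have h2 : r ^ (-β) * z ^ β = (z / r) ^ β := by
    rw [Real.div_rpow hz.le hr.le, Real.rpow_neg hr.le, div_eq_mul_inv, mul_comm]
  rw [h1, h2]

lemma tauBar_eq (d : ℕ) (α t : ℝ) (lam : MeasureTheory.Measure ℝ) [SigmaFinite lam]
    (hα0 : 0 < α) (hd0 : (0:ℝ) < d) (ht : 0 < t) {r : ℝ} (hr : 0 < r) :
    tauBar d α t lam r = ENNReal.ofReal (r ^ (-(α / (d:ℝ)))) *
      ∫⁻ z in Ioi (0:ℝ),
        ENNReal.ofReal (min (t * r ^ (α / (d:ℝ))) (z ^ (α / (d:ℝ)))) ∂lam := by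
  have hγ : 0 < (d:ℝ) / α := div_pos hd0 hα0
  have hβ : 0 < α / (d:ℝ) := div_pos hα0 hd0
  have hγinv : ((d:ℝ) / α)⁻¹ = α / (d:ℝ) := inv_div _ _
  have hS : MeasurableSet {p : ℝ × ℝ | r < p.2 * p.1 ^ (-((d : ℝ) / α))} := by
    apply measurableSet_lt measurable_const
    fun_prop
  rw [tauBar, Measure.prod_apply_symm hS]
  have hcongr : ∫⁻ z in Ioi (0:ℝ),
      (volume.restrict (Ioc (0:ℝ) t)) ((fun s => (s, z)) ⁻¹' {p : ℝ × ℝ | r < p.2 * p.1 ^ (-((d : ℝ) / α))}) ∂lam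
      = ∫⁻ z in Ioi (0:ℝ),
        ENNReal.ofReal (r ^ (-(α / (d:ℝ)))) *
          ENNReal.ofReal (min (t * r ^ (α / (d:ℝ))) (z ^ (α / (d:ℝ)))) ∂lam := by
    apply setLIntegral_congr_fun measurableSet_Ioi
    intro z hz
    beta_reduce
    have : ((fun s => (s, z)) ⁻¹' {p : ℝ × ℝ | r < p.2 * p.1 ^ (-((d : ℝ) / α))})
        = {s : ℝ | r < z * s ^ (-((d : ℝ) / α))} := rfl
    rw [this, aux_inner _ hγ ht hr hz, hγinv, aux_min_eq _ hβ hr hz,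
      ENNReal.ofReal_mul (Real.rpow_pos_of_pos hr _).le]
  rw [hcongr, lintegral_const_mul' _ _ ENNReal.ofReal_ne_top]

theorem stmt2 (d : ℕ) (hd : 1 ≤ d) (α : ℝ) (hα : α ∈ Set.Ioo (0:ℝ) 2) (t : ℝ) (ht : 0 < t)
    (lam : MeasureTheory.Measure ℝ) [SigmaFinite lam]
    (hlam0 : lam (Set.Iic 0) = 0) (hlam_ne : lam ≠ 0)
    (hmom : ∫⁻ z in Set.Ioi (0:ℝ), ENNReal.ofReal (min 1 (z ^ 2)) ∂lam ≠ ⊤)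
    (hsmall : ∫⁻ z in Set.Ioc (0:ℝ) 1, ENNReal.ofReal (z ^ (α / (d:ℝ))) ∂lam ≠ ⊤)
    (hbig : ∫⁻ z in Set.Ioi (1:ℝ), ENNReal.ofReal (z ^ (α / (d:ℝ))) ∂lam ≠ ⊤) :
    Filter.Tendsto
      (fun r : ℝ => (tauBar d α t lam r).toReal /
        (r ^ (-(α / (d:ℝ))) *
          (∫⁻ z in Set.Ioi (0:ℝ), ENNReal.ofReal (z ^ (α / (d:ℝ))) ∂lam).toReal))
      Filter.atTop (nhds 1) := by
  obtain ⟨hα0, hα2⟩ := hα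
  have hd0 : (0:ℝ) < d := by exact_mod_cast hd
  set β := α / (d:ℝ) with hβdef
  have hβ : 0 < β := div_pos hα0 hd0
  set M := ∫⁻ z in Set.Ioi (0:ℝ), ENNReal.ofReal (z ^ β) ∂lam with hMdef
  -- M is finite
  have hMtop : M ≠ ⊤ := by
    have hu : Ioi (0:ℝ) = Ioc 0 1 ∪ Ioi 1 := (Set.Ioc_union_Ioi_eq_Ioi zero_le_one).symm
    rw [hMdef, hu, lintegral_union measurableSet_Ioi (Set.Ioc_disjoint_Ioi le_rfl)]
    exact ENNReal.add_ne_top.2 ⟨hsmall, hbig⟩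
  -- M is nonzero
  have hM0 : M ≠ 0 := by
    intro h0
    have hmeas : Measurable fun z : ℝ => ENNReal.ofReal (z ^ β) := by fun_prop
    rw [hMdef, lintegral_eq_zero_iff hmeas] at h0
    rw [Filter.EventuallyEq, ae_restrict_iff' measurableSet_Ioi] at h0
    have h1 : ∀ᵐ z ∂lam, z ∉ Ioi (0:ℝ) := by
      filter_upwards [h0] with z hz hmem
      have := hz hmem
      simp only [Pi.zero_apply, ENNReal.ofReal_eq_zero] at this
      exact absurd this (not_le.2 (Real.rpow_pos_of_pos hmem _))
    have h2 : lam (Ioi (0:ℝ)) = 0 := measure_eq_zero_iff_ae_notMem.2 h1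
    have h3 : lam Set.univ = 0 := by
      have := measure_union_le (μ := lam) (Set.Iic (0:ℝ)) (Set.Ioi 0)
      rw [Set.Iic_union_Ioi, hlam0, h2] at this
      simpa using this
    exact hlam_ne (Measure.measure_univ_eq_zero.1 h3)
  -- the normalized integral
  set f : ℝ → ℝ≥0∞ := fun r =>
    ∫⁻ z in Ioi (0:ℝ), ENNReal.ofReal (min (t * r ^ β) (z ^ β)) ∂lam with hfdef
  have hfM : ∀ r, f r ≤ M :=
    fun r => lintegral_mono fun z => ENNReal.ofReal_le_ofReal (min_le_right _ _)
  have hftop : ∀ r, f r ≠ ⊤ := fun r => ne_top_of_le_ne_top hMtop (hfM r)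
  have hmono : ∀ a b : ℝ, 0 ≤ a → a ≤ b → f a ≤ f b := by
    intro a b ha hab
    apply lintegral_mono
    intro z
    exact ENNReal.ofReal_le_ofReal (min_le_min
      (mul_le_mul_of_nonneg_left (Real.rpow_le_rpow ha hab hβ.le) ht.le) le_rfl)
  set g : ℝ → ℝ≥0∞ := fun r => f (max r 1) with hgdef
  have hgmono : Monotone g := fun a b hab =>
    hmono _ _ (le_trans zero_le_one (le_max_right a 1)) (max_le_max hab le_rfl)
  have hgt : Tendsto g atTop (𝓝 (⨆ r : ℝ, g r)) := tendsto_atTop_iSup hgmono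
  -- the supremum is M
  have hsup : (⨆ r : ℝ, g r) = M := by
    apply le_antisymm (iSup_le fun r => hfM _)
    set F : ℕ → ℝ → ℝ≥0∞ := fun n z =>
      ENNReal.ofReal (min (t * ((n:ℝ) + 1) ^ β) (z ^ β)) with hFdef
    have hFmeas : ∀ n, Measurable (F n) := by
      intro n; rw [hFdef]; fun_prop
    have hFmono : Monotone F := by
      intro n m hnm
      intro z
      apply ENNReal.ofReal_le_ofReal
      refine min_le_min (mul_le_mul_of_nonneg_left
        (Real.rpow_le_rpow (by positivity) (by exact_mod_cast Nat.add_le_add_right hnm 1) hβ.le) ht.le) le_rfl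
    have hpt : ∀ z : ℝ, (⨆ n : ℕ, F n z) = ENNReal.ofReal (z ^ β) := by
      intro z
      apply le_antisymm (iSup_le fun n => ENNReal.ofReal_le_ofReal (min_le_right _ _))
      obtain ⟨n, hn⟩ := exists_nat_ge ((max (z ^ β / t) 0) ^ β⁻¹)
      have hK : max (z ^ β / t) 0 ≤ ((n:ℝ) + 1) ^ β := by
        calc max (z ^ β / t) 0 = ((max (z ^ β / t) 0) ^ β⁻¹) ^ β :=
              (Real.rpow_inv_rpow (le_max_right _ _) hβ.ne').symm
          _ ≤ ((n:ℝ) + 1) ^ β := by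
              apply Real.rpow_le_rpow (Real.rpow_nonneg (le_max_right _ _) _) _ hβ.le
              linarith
      have h1 : z ^ β ≤ t * ((n:ℝ) + 1) ^ β := by
        have h2 : z ^ β / t ≤ ((n:ℝ) + 1) ^ β := le_trans (le_max_left _ _) hK
        calc z ^ β = t * (z ^ β / t) := by field_simp
          _ ≤ t * ((n:ℝ) + 1) ^ β := mul_le_mul_of_nonneg_left h2 ht.le
      exact le_iSup_of_le n (le_of_eq (congrArg ENNReal.ofReal (inf_eq_right.mpr h1)).symm)
    calc M = ∫⁻ z in Ioi (0:ℝ), ⨆ n : ℕ, F n z ∂lam := by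
          rw [hMdef]; exact lintegral_congr fun z => (hpt z).symm
      _ = ⨆ n : ℕ, ∫⁻ z in Ioi (0:ℝ), F n z ∂lam := lintegral_iSup hFmeas hFmono
      _ ≤ ⨆ r : ℝ, g r := by
          apply iSup_le
          intro n
          refine le_iSup_of_le ((n:ℝ) + 1) (le_of_eq ?_)
          rw [hgdef]
          simp only []
          rw [max_eq_left (by linarith [Nat.cast_nonneg (α := ℝ) n])]
  rw [hsup] at hgt
  have hft : Tendsto f atTop (𝓝 M) := by
    apply hgt.congr'
    filter_upwards [eventually_ge_atTop (1:ℝ)] with r hr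
    rw [hgdef]; simp only []; rw [max_eq_left hr]
  have htoReal : Tendsto (fun r => (f r).toReal) atTop (𝓝 M.toReal) :=
    (ENNReal.tendsto_toReal hMtop).comp hft
  have hMr : M.toReal ≠ 0 := by
    simp [ENNReal.toReal_eq_zero_iff, hM0, hMtop]
  have final : Tendsto (fun r => (f r).toReal / M.toReal) atTop (𝓝 1) := by
    have h := htoReal.div_const M.toReal
    rwa [div_self hMr] at h
  apply final.congr'
  filter_upwards [eventually_ge_atTop (1:ℝ)] with r hr
  have hr0 : (0:ℝ) < r := lt_of_lt_of_le one_pos hr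
  rw [tauBar_eq d α t lam hα0 hd0 ht hr0, ENNReal.toReal_mul,
    ENNReal.toReal_ofReal (Real.rpow_pos_of_pos hr0 _).le,
    mul_div_mul_left _ _ (ne_of_gt (Real.rpow_pos_of_pos hr0 (-β)))]
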